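/- If a set of supports A^Fek = {a_1,...,a_r} maximizes the absolute value of the normalized Vandermonde determinant |det V(A)| over all admissible sets A of size r, then for every support a ⊆ I one has |(1/|a|)∫_a ℓ_{a_i}(x) dx| ≤ 1 for each i, and consequently the sup-norm of each normalized Lagrange basis function satisfies ‖ℓ_{a_i}‖_∞ = 1. -/

import Mathlib

open Polynomial intervalIntegral

/-- The normalized average of `f` over the support `[a,b]`: the mean value of `f`
if `a < b`, and the point evaluation `f a` if the support degenerates to a node. -/
noncomputable def avgSeg (a b : ℝ) (f : ℝ → ℝ) : ℝ :=
  if a < b then (b - a)⁻¹ * ∫ x in a..b, f x else f a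

lemma avgSeg_poly_sum {r : ℕ} (a b : ℝ) (c : Fin r → ℝ) (p : Fin r → Polynomial ℝ) :
    avgSeg a b (fun x => ∑ k, c k * (p k).eval x)
      = ∑ k, c k * avgSeg a b (fun x => (p k).eval x) := by
  unfold avgSeg
  split_ifs with h
  · simp only
    rw [intervalIntegral.integral_finset_sum (f := fun k x => c k * (p k).eval x) (fun k _ =>
      ((continuous_const.mul (p k).continuous).intervalIntegrable a b)), Finset.mul_sum]
    congr 1; funext k
    rw [intervalIntegral.integral_const_mul]; ring
  · simp

/-- If a set of r supports in [-1,1] maximizes the absolute value of the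
normalized Vandermonde determinant among all admissible sets of r supports, then all
normalized averages of the Lagrange basis functions over arbitrary supports are
bounded by 1, and the sup-norm of each Lagrange basis function equals 1. -/
theorem stmt6 (r : ℕ) (hr : 0 < r) (B : Fin r → Polynomial ℝ)
    (hBdeg : ∀ j, (B j).degree < (r : ℕ)) (hBli : LinearIndependent ℝ B)
    (α β : Fin r → ℝ) (hab : ∀ i, α i ≤ β i) (hI : ∀ i, -1 ≤ α i ∧ β i ≤ 1)
    (hmax : ∀ α' β' : Fin r → ℝ, (∀ i, -1 ≤ α' i ∧ α' i ≤ β' i ∧ β' i ≤ 1) →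
      |(Matrix.of fun i j : Fin r =>
          avgSeg (α' i) (β' i) fun x => (B j).eval x).det| ≤
        |(Matrix.of fun i j : Fin r =>
          avgSeg (α i) (β i) fun x => (B j).eval x).det|)
    (ℓ : Fin r → Polynomial ℝ) (hdeg : ∀ i, (ℓ i).degree < (r : ℕ))
    (hdual : ∀ i j, avgSeg (α i) (β i) (fun x => (ℓ j).eval x) = if i = j then 1 else 0) :
    (∀ i, ∀ a b : ℝ, -1 ≤ a → a ≤ b → b ≤ 1 →
      |avgSeg a b fun x => (ℓ i).eval x| ≤ 1) ∧
    (∀ i, sSup ((fun x => |(ℓ i).eval x|) '' Set.Icc (-1 : ℝ) 1) = 1) := by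
  haveI : Nonempty (Fin r) := ⟨⟨0, hr⟩⟩
  -- Express each Lagrange polynomial in the basis B
  obtain ⟨C, hC⟩ : ∃ C : Fin r → Fin r → ℝ, ∀ j, ℓ j = ∑ k, C j k • B k := by
    have hfin : Module.finrank ℝ (degreeLT ℝ r) = r := by
      rw [(Polynomial.degreeLTEquiv ℝ r).finrank_eq, Module.finrank_fin_fun]
    set B' : Fin r → degreeLT ℝ r := fun j => ⟨B j, mem_degreeLT.mpr (hBdeg j)⟩ with hB'
    have hB'li : LinearIndependent ℝ B' :=
      LinearIndependent.of_comp (degreeLT ℝ r).subtype hBli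
    let bB : Module.Basis (Fin r) ℝ (degreeLT ℝ r) :=
      basisOfLinearIndependentOfCardEqFinrank hB'li (by simp [hfin])
    have hbB : ∀ j, (bB j : Polynomial ℝ) = B j := fun j => by
      rw [coe_basisOfLinearIndependentOfCardEqFinrank]
    refine ⟨fun j k => bB.repr ⟨ℓ j, mem_degreeLT.mpr (hdeg j)⟩ k, fun j => ?_⟩
    have h1 := bB.sum_repr ⟨ℓ j, mem_degreeLT.mpr (hdeg j)⟩
    have h2 := congrArg (Subtype.val) h1
    simp only [AddSubmonoidClass.coe_finset_sum, SetLike.val_smul, hbB] at h2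
    exact h2.symm
  have heval : ∀ j x, (ℓ j).eval x = ∑ k, C j k * (B k).eval x := by
    intro j x
    conv_lhs => rw [hC j]
    simp [Polynomial.eval_finset_sum]
  have hexp : ∀ (a b : ℝ) (j : Fin r), avgSeg a b (fun x => (ℓ j).eval x)
      = ∑ k, C j k * avgSeg a b (fun x => (B k).eval x) := by
    intro a b j
    rw [← avgSeg_poly_sum]
    congr 1
    funext x
    exact heval j x
  set M : Matrix (Fin r) (Fin r) ℝ :=
    Matrix.of fun i j => avgSeg (α i) (β i) fun x => (B j).eval x with hM
  set N : Matrix (Fin r) (Fin r) ℝ := Matrix.of fun k j => C j k with hN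
  have hMN : M * N = 1 := by
    ext i j
    rw [Matrix.mul_apply]
    have h1 := hexp (α i) (β i) j
    rw [hdual i j] at h1
    rw [show ∑ k, M i k * N k j = ∑ k, C j k * avgSeg (α i) (β i) fun x => (B k).eval x by
      apply Finset.sum_congr rfl; intro k _; simp [hM, hN, mul_comm], ← h1]
    simp [Matrix.one_apply]
  have hdet : M.det * N.det = 1 := by rw [← Matrix.det_mul, hMN, Matrix.det_one]
  have key : ∀ i, ∀ a b : ℝ, -1 ≤ a → a ≤ b → b ≤ 1 →
      |avgSeg a b fun x => (ℓ i).eval x| ≤ 1 := by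
    intro i a b h1 h2 h3
    set α' := Function.update α i a with hα'
    set β' := Function.update β i b with hβ'
    set M' : Matrix (Fin r) (Fin r) ℝ :=
      Matrix.of fun p q => avgSeg (α' p) (β' p) fun x => (B q).eval x with hM'
    have hcond : ∀ p, -1 ≤ α' p ∧ α' p ≤ β' p ∧ β' p ≤ 1 := by
      intro p
      by_cases hp : p = i
      · subst hp; simp [hα', hβ', h1, h2, h3]
      · simp only [hα', hβ', Function.update_apply, if_neg hp]
        exact ⟨(hI p).1, hab p, (hI p).2⟩
    have hM'bound : |M'.det| ≤ |M.det| := hmax α' β' hcond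
    have hM'N : M' * N
        = Matrix.updateRow 1 i (fun q => avgSeg a b fun x => (ℓ q).eval x) := by
      ext p q
      rw [Matrix.mul_apply]
      have hrow : ∑ k, M' p k * N k q
          = avgSeg (α' p) (β' p) fun x => (ℓ q).eval x := by
        rw [hexp (α' p) (β' p) q]
        apply Finset.sum_congr rfl; intro k _; simp [hM', hN, mul_comm]
      by_cases hp : p = i
      · subst hp
        rw [Matrix.updateRow_self, hrow]
        simp [hα', hβ']
      · rw [Matrix.updateRow_ne hp, hrow]
        simp only [hα', hβ', Function.update_apply, if_neg hp]
        rw [hdual p q]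
        simp [Matrix.one_apply]
    have hdet' : M'.det * N.det = avgSeg a b fun x => (ℓ i).eval x := by
      have hfun : (fun q => avgSeg a b fun x => (ℓ q).eval x)
          = ∑ k, (avgSeg a b fun x => (ℓ k).eval x) • (1 : Matrix (Fin r) (Fin r) ℝ) k := by
        funext q
        simp [Matrix.one_apply, Pi.single_apply]
      rw [← Matrix.det_mul, hM'N, hfun, Matrix.det_updateRow_sum, Matrix.det_one,
        smul_eq_mul, mul_one]
    calc |avgSeg a b fun x => (ℓ i).eval x| = |M'.det| * |N.det| := by
          rw [← hdet', abs_mul]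
      _ ≤ |M.det| * |N.det| := mul_le_mul_of_nonneg_right hM'bound (abs_nonneg _)
      _ = 1 := by rw [← abs_mul, hdet, abs_one]
  refine ⟨key, ?_⟩
  intro i
  have hpt : ∀ x ∈ Set.Icc (-1 : ℝ) 1, |(ℓ i).eval x| ≤ 1 := by
    intro x hx
    have h := key i x x hx.1 le_rfl hx.2
    simpa [avgSeg] using h
  set S := (fun x => |(ℓ i).eval x|) '' Set.Icc (-1 : ℝ) 1 with hS
  have hne : S.Nonempty := ⟨|(ℓ i).eval 0|, ⟨0, by norm_num, rfl⟩⟩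
  have hbdd : ∀ y ∈ S, y ≤ 1 := by rintro y ⟨x, hx, rfl⟩; exact hpt x hx
  have hba : BddAbove S := ⟨1, hbdd⟩
  have hub : sSup S ≤ 1 := csSup_le hne hbdd
  have hge : 1 ≤ sSup S := by
    by_cases h : α i < β i
    · have hsub : Set.Icc (α i) (β i) ⊆ Set.Icc (-1 : ℝ) 1 := fun x hx =>
        ⟨le_trans (hI i).1 hx.1, le_trans hx.2 (hI i).2⟩
      have hone : (β i - α i)⁻¹ * ∫ x in α i..β i, (ℓ i).eval x = 1 := by
        have hd := hdual i i
        simpa [avgSeg, h] using hd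
      have hpos : (0 : ℝ) < β i - α i := sub_pos.mpr h
      have hint : ∫ x in α i..β i, (ℓ i).eval x = β i - α i := by
        field_simp at hone
        linarith
      have hle : ∫ x in α i..β i, (ℓ i).eval x ≤ ∫ _x in α i..β i, sSup S := by
        apply intervalIntegral.integral_mono_on h.le
          ((ℓ i).continuous.intervalIntegrable _ _) (intervalIntegrable_const)
        intro x hx
        exact le_trans (le_abs_self _) (le_csSup hba ⟨x, hsub hx, rfl⟩)
      rw [hint, intervalIntegral.integral_const, smul_eq_mul] at hle
      nlinarith
    · have hev : (ℓ i).eval (α i) = 1 := by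
        have hd := hdual i i
        simpa [avgSeg, h] using hd
      refine le_csSup hba ⟨α i, ⟨(hI i).1, le_trans (hab i) (hI i).2⟩, ?_⟩
      simp [hev]
  exact le_antisymm hub hge
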